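/- Let $\mathcal{B} \subseteq \omega^\omega$ be an unbounded family (with respect to eventual domination $<^*$) consisting of strictly increasing functions, and let $(C_n)_{n \in \omega}$ be a sequence of pairwise disjoint finite nonempty subsets of $\omega$. Then there exists $g \in \mathcal{B}$ and an infinite set $E \subseteq \omega$ such that $g[\omega] \cap \bigcup_{n \in E} C_n = \emptyset$. -/

import Mathlib

open Filter

/-- If `ℬ ⊆ ω^ω` is unbounded (w.r.t. eventual domination) and consists of
strictly increasing functions, and `(C n)` is a sequence of pairwise disjoint finite nonempty
subsets of `ω`, then some `g ∈ ℬ` and some infinite `E ⊆ ω` satisfy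
`range g ∩ ⋃_{n ∈ E} C n = ∅`. -/
theorem stmt5 (ℬ : Set (ℕ → ℕ))
    (hunb : ¬ ∃ h : ℕ → ℕ, ∀ f ∈ ℬ, ∀ᶠ n in atTop, f n < h n)
    (hmono : ∀ f ∈ ℬ, StrictMono f)
    (C : ℕ → Set ℕ) (hfin : ∀ n, (C n).Finite) (hne : ∀ n, (C n).Nonempty)
    (hdisj : ∀ m n, m ≠ n → Disjoint (C m) (C n)) :
    ∃ g ∈ ℬ, ∃ E : Set ℕ, E.Infinite ∧ Disjoint (Set.range g) (⋃ n ∈ E, C n) := by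
  classical
  -- For any bound `b`, some `C n` lies entirely above `b`.
  have hpick : ∀ b : ℕ, ∃ n, ∀ x ∈ C n, b ≤ x := by
    intro b
    by_contra hcon
    push_neg at hcon
    choose x hx hxb using hcon
    have hinj : Function.Injective x := by
      intro m n hmn
      by_contra hne'
      exact (hdisj m n hne').le_bot ⟨hx m, hmn ▸ hx n⟩
    have hsub : Set.range x ⊆ Set.Iio b := by rintro _ ⟨n, rfl⟩; exact hxb n
    exact (Set.infinite_range_of_injective hinj) ((Set.finite_Iio b).subset hsub)
  choose pick hpick' using hpick
  let maxC : ℕ → ℕ := fun n => (hfin n).toFinset.max' (by simpa using hne n)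
  have hmaxC : ∀ n, ∀ x ∈ C n, x ≤ maxC n := fun n x hx =>
    (hfin n).toFinset.le_max' x (by simpa using hx)
  -- The interval endpoints
  let a : ℕ → ℕ := fun i => Nat.rec 0 (fun _ ai => maxC (pick ai) + 1) i
  have haS : ∀ i, a (i + 1) = maxC (pick (a i)) + 1 := fun i => rfl
  let idx : ℕ → ℕ := fun i => pick (a i)
  have hCsub : ∀ i, C (idx i) ⊆ Set.Ico (a i) (a (i + 1)) := by
    intro i x hx
    exact ⟨hpick' (a i) x hx, by rw [haS]; exact Nat.lt_succ_of_le (hmaxC _ x hx)⟩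
  have hamono : StrictMono a := strictMono_nat_of_lt_succ (by
    intro i
    rw [haS]
    calc a i ≤ (hne (idx i)).choose := hpick' (a i) _ (hne (idx i)).choose_spec
      _ ≤ maxC (idx i) := hmaxC _ _ (hne (idx i)).choose_spec
      _ < _ := Nat.lt_succ_self _)
  have hIdisj : ∀ i j, i ≠ j →
      Disjoint (Set.Ico (a i) (a (i + 1))) (Set.Ico (a j) (a (j + 1))) := by
    intro i j hij
    rw [Set.disjoint_left]
    rintro x ⟨hx1, hx2⟩ ⟨hy1, hy2⟩
    rcases hij.lt_or_gt with h | h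
    · have := hx2.trans_le (hamono.monotone (Nat.succ_le_of_lt h)); omega
    · have := hy2.trans_le (hamono.monotone (Nat.succ_le_of_lt h)); omega
  -- get an unbounded g
  have key : ∃ g ∈ ℬ, ∃ᶠ m in atTop, a (2 * m + 2) ≤ g m := by
    by_contra hcon
    push_neg at hcon
    refine hunb ⟨fun m => a (2 * m + 2), fun f hf => ?_⟩
    have := hcon f hf
    simpa only [not_frequently, not_le] using this
  obtain ⟨g, hgB, hg⟩ := key
  have hgmono := hmono g hgB
  -- the set of missed intervals
  set S : Set ℕ := {i | Disjoint (Set.range g) (Set.Ico (a i) (a (i + 1)))} with hS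
  have hSinf : S.Infinite := by
    apply Set.infinite_of_forall_exists_gt
    intro N
    obtain ⟨m, hmN, hm⟩ := (frequently_atTop.mp hg) (N + 1)
    -- find a missed interval with index in [N+1, 2m+2)
    by_contra hcon
    push_neg at hcon
    -- every interval with index in Ico (N+1) (2m+2) is hit
    have hhit : ∀ i ∈ Finset.Ico (N + 1) (2 * m + 2), ∃ k, g k ∈ Set.Ico (a i) (a (i + 1)) := by
      intro i hi
      simp only [Finset.mem_Ico] at hi
      have hiS : i ∉ S := fun h => absurd (hcon i h) (by omega)
      rw [hS, Set.mem_setOf_eq, Set.disjoint_right] at hiS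
      push_neg at hiS
      obtain ⟨x, hxIco, k, rfl⟩ := hiS
      exact ⟨k, hxIco⟩
    choose k hk using hhit
    have hklt : ∀ i hi, k i hi < m := by
      intro i hi
      by_contra hkm
      push_neg at hkm
      have h1 : a (2 * m + 2) ≤ g (k i hi) := hm.trans (hgmono.monotone hkm)
      have h2 : g (k i hi) < a (i + 1) := (hk i hi).2
      have h3 : i + 1 ≤ 2 * m + 2 := (Finset.mem_Ico.mp hi).2
      exact absurd (h2.trans_le (hamono.monotone h3)) (not_lt.mpr h1)
    have hcard : (Finset.Ico (N + 1) (2 * m + 2)).card ≤ (Finset.range m).card := by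
      apply Finset.card_le_card_of_injOn (fun i => if hi : i ∈ Finset.Ico (N + 1) (2 * m + 2) then k i hi else 0)
      · intro i hi
        simp only [hi, dif_pos, Finset.mem_range]
        exact Finset.mem_coe.mpr (by rw [dif_pos (Finset.mem_coe.mp hi)]; exact Finset.mem_range.mpr (hklt i (Finset.mem_coe.mp hi)))
      · intro i hi j hj hij
        simp only [Finset.mem_coe] at hi hj
        simp only [hi, hj, dif_pos] at hij
        by_contra hne'
        exact (hIdisj i j hne').le_bot ⟨hk i hi, hij ▸ hk j hj⟩
    rw [Nat.card_Ico, Finset.card_range] at hcard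
    omega
  refine ⟨g, hgB, idx '' S, ?_, ?_⟩
  · apply hSinf.image
    intro i _ j _ hij
    by_contra hne'
    obtain ⟨x, hx⟩ := hne (idx i)
    exact (hIdisj i j hne').le_bot ⟨hCsub i hx, hCsub j (hij ▸ hx)⟩
  · rw [Set.disjoint_right]
    rintro x hx hgx
    simp only [Set.mem_iUnion] at hx
    obtain ⟨n, ⟨i, hiS, rfl⟩, hxn⟩ := hx
    exact (hiS : Disjoint _ _).le_bot ⟨hgx, hCsub i hxn⟩
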